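/- arXiv:2004.05899 — 3 statements merged into one kernel-verified Lean document; each statement's English description precedes it below -/
import Mathlib

section
/- For an R-module M, the unit η_M: M → Pb(Ind(M)), m ↦ (1 ⊗ m, 1 ⊗ m), is injective if and only if M is separated, i.e. M admits an injective R-linear map into X₁ ⊕ X₂ for some R₁-module X₁ and R₂-module X₂ (regarded as R-modules via i₁ and i₂). -/
open TensorProduct

section Pullback

variable (R₁ R₂ R' : Type) [CommRing R₁] [CommRing R₂] [CommRing R']
variable [Algebra R₁ R'] [Algebra R₂ R']

/-- The pullback ring of `π₁ = algebraMap R₁ R'` and `π₂ = algebraMap R₂ R'`,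
as a subring of `R₁ × R₂`. -/
def pullbackSubring : Subring (R₁ × R₂) :=
  RingHom.eqLocus ((algebraMap R₁ R').comp (RingHom.fst R₁ R₂))
    ((algebraMap R₂ R').comp (RingHom.snd R₁ R₂))

abbrev PB := ↥(pullbackSubring R₁ R₂ R')

def pbFst : PB R₁ R₂ R' →+* R₁ := (RingHom.fst R₁ R₂).comp (pullbackSubring R₁ R₂ R').subtype
def pbSnd : PB R₁ R₂ R' →+* R₂ := (RingHom.snd R₁ R₂).comp (pullbackSubring R₁ R₂ R').subtype

instance : Algebra (PB R₁ R₂ R') R₁ := (pbFst R₁ R₂ R').toAlgebra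
instance : Algebra (PB R₁ R₂ R') R₂ := (pbSnd R₁ R₂ R').toAlgebra
instance : Algebra (PB R₁ R₂ R') R' :=
  ((algebraMap R₁ R').comp (pbFst R₁ R₂ R')).toAlgebra

instance : IsScalarTower (PB R₁ R₂ R') R₁ R' :=
  IsScalarTower.of_algebraMap_eq fun a => rfl

instance : IsScalarTower (PB R₁ R₂ R') R₂ R' :=
  IsScalarTower.of_algebraMap_eq fun a => a.2

end Pullback

open scoped TensorProduct

/-- for an `R`-module `M` over the pullback ring `R`, the unit
`η_M : M → Pb(Ind M)`, `m ↦ (1 ⊗ m, 1 ⊗ m)`, is injective if and only if `M` is separated,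
i.e. `M` admits an injective `R`-linear map into `X₁ ⊕ X₂` for some `R₁`-module `X₁` and
`R₂`-module `X₂` (regarded as `R`-modules by restriction of scalars along `i₁`, `i₂`). -/
theorem unit_injective_iff_separated
    (R₁ R₂ R' : Type) [CommRing R₁] [CommRing R₂] [CommRing R']
    [Algebra R₁ R'] [Algebra R₂ R']
    (M : Type) [AddCommGroup M] [Module (PB R₁ R₂ R') M] :
    letI R := PB R₁ R₂ R'
    (Function.Injective fun m : M =>
        (((1 : R₁) ⊗ₜ[R] m : R₁ ⊗[R] M), ((1 : R₂) ⊗ₜ[R] m : R₂ ⊗[R] M))) ↔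
      ∃ (X₁ : Type) (_ : AddCommGroup X₁) (_ : Module R₁ X₁)
        (_ : Module (PB R₁ R₂ R') X₁) (_ : IsScalarTower (PB R₁ R₂ R') R₁ X₁)
        (X₂ : Type) (_ : AddCommGroup X₂) (_ : Module R₂ X₂)
        (_ : Module (PB R₁ R₂ R') X₂) (_ : IsScalarTower (PB R₁ R₂ R') R₂ X₂)
        (f : M →ₗ[PB R₁ R₂ R'] X₁ × X₂), Function.Injective f := by
  letI R := PB R₁ R₂ R'
  constructor
  · intro h
    exact ⟨R₁ ⊗[R] M, inferInstance, inferInstance, inferInstance, inferInstance,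
      R₂ ⊗[R] M, inferInstance, inferInstance, inferInstance, inferInstance,
      (TensorProduct.mk R R₁ M 1).prod (TensorProduct.mk R R₂ M 1), h⟩
  · rintro ⟨X₁, _, _, _, _, X₂, _, _, _, _, f, hf⟩
    intro m m' hmm
    have h1 : ((1:R₁) ⊗ₜ[R] m : R₁ ⊗[R] M) = (1:R₁) ⊗ₜ[R] m' := congrArg Prod.fst hmm
    have h2 : ((1:R₂) ⊗ₜ[R] m : R₂ ⊗[R] M) = (1:R₂) ⊗ₜ[R] m' := congrArg Prod.snd hmm
    apply hf
    have e1 := congrArg (LinearMap.liftBaseChange R₁ ((LinearMap.fst R X₁ X₂).comp f)) h1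
    have e2 := congrArg (LinearMap.liftBaseChange R₂ ((LinearMap.snd R X₁ X₂).comp f)) h2
    simp only [LinearMap.liftBaseChange_tmul, LinearMap.comp_apply, LinearMap.fst_apply,
      LinearMap.snd_apply, one_smul] at e1 e2
    exact Prod.ext e1 e2
end

section
/- If π₁: R₁ → R' is surjective, then for every R-module M the unit η_M: M → Pb(Ind(M)) of the adjunction (Ind, Pb) is surjective. -/
open TensorProduct

open scoped TensorProduct

set_option maxHeartbeats 1000000 in
set_option synthInstance.maxHeartbeats 400000 in
/-- if `π₁ : R₁ → R'` is surjective, then for every module `M` over the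
pullback ring `R` the unit `η_M : M → Pb(Ind M)`, `m ↦ (1 ⊗ m, 1 ⊗ m)`, is surjective:
every element of `Pb(R₁ ⊗_R M, R₂ ⊗_R M; can_M) ⊆ (R₁ ⊗_R M) ⊕ (R₂ ⊗_R M)` is of the form
`(1 ⊗ m, 1 ⊗ m)`.  (Membership in the pullback is expressed via the canonical isomorphisms
`R' ⊗_{Rᵢ} (Rᵢ ⊗_R M) ≅ R' ⊗_R M`.) -/
theorem unit_surjective_of_surjective
    (R₁ R₂ R' : Type) [CommRing R₁] [CommRing R₂] [CommRing R']
    [Algebra R₁ R'] [Algebra R₂ R']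
    (hπ₁ : Function.Surjective (algebraMap R₁ R'))
    (M : Type) [AddCommGroup M] [Module (PB R₁ R₂ R') M] :
    letI R := PB R₁ R₂ R'
    letI e₁ : (R' ⊗[R₁] (R₁ ⊗[R] M)) ≃ₗ[R'] R' ⊗[R] M :=
      TensorProduct.AlgebraTensorModule.cancelBaseChange R R₁ R' R' M
    letI e₂ : (R' ⊗[R₂] (R₂ ⊗[R] M)) ≃ₗ[R'] R' ⊗[R] M :=
      TensorProduct.AlgebraTensorModule.cancelBaseChange R R₂ R' R' M
    ∀ (x₁ : R₁ ⊗[R] M) (x₂ : R₂ ⊗[R] M),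
      e₁ ((1 : R') ⊗ₜ[R₁] x₁) = e₂ ((1 : R') ⊗ₜ[R₂] x₂) →
        ∃ m : M, x₁ = (1 : R₁) ⊗ₜ[R] m ∧ x₂ = (1 : R₂) ⊗ₜ[R] m := by
  intro x₁ x₂ hx
  classical
  -- R-linear "projection" maps
  set f₁ : R₁ →ₗ[PB R₁ R₂ R'] R' := (IsScalarTower.toAlgHom (PB R₁ R₂ R') R₁ R').toLinearMap
    with hf₁
  set f₂ : R₂ →ₗ[PB R₁ R₂ R'] R' := (IsScalarTower.toAlgHom (PB R₁ R₂ R') R₂ R').toLinearMap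
    with hf₂
  set θ₁ := LinearMap.rTensor M f₁ with hθ₁
  set θ₂ := LinearMap.rTensor M f₂ with hθ₂
  -- identify e₁ (1 ⊗ ·) with θ₁, etc.
  have key₁ : ∀ x : R₁ ⊗[PB R₁ R₂ R'] M, (TensorProduct.AlgebraTensorModule.cancelBaseChange (PB R₁ R₂ R') R₁ R' R' M) ((1 : R') ⊗ₜ[R₁] x) = θ₁ x := by
    intro x
    induction x using TensorProduct.induction_on with
    | zero => simp
    | tmul r m =>
        simp [hθ₁, hf₁, Algebra.smul_def, TensorProduct.smul_tmul']
    | add a b ha hb =>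
        rw [TensorProduct.tmul_add, map_add, map_add, ha, hb]
  have key₂ : ∀ x : R₂ ⊗[PB R₁ R₂ R'] M, (TensorProduct.AlgebraTensorModule.cancelBaseChange (PB R₁ R₂ R') R₂ R' R' M) ((1 : R') ⊗ₜ[R₂] x) = θ₂ x := by
    intro x
    induction x using TensorProduct.induction_on with
    | zero => simp
    | tmul r m =>
        simp [hθ₂, hf₂, Algebra.smul_def, TensorProduct.smul_tmul']
    | add a b ha hb =>
        rw [TensorProduct.tmul_add, map_add, map_add, ha, hb]
  -- pbSnd is surjective, so every element of R₂ ⊗ M is 1 ⊗ m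
  obtain ⟨m₂, hm₂⟩ : ∃ m₂ : M, x₂ = (1 : R₂) ⊗ₜ[PB R₁ R₂ R'] m₂ := by
    have H : ∀ x : R₂ ⊗[PB R₁ R₂ R'] M, ∃ m : M, x = (1 : R₂) ⊗ₜ[PB R₁ R₂ R'] m := by
      intro x
      induction x using TensorProduct.induction_on with
      | zero => exact ⟨0, by simp⟩
      | tmul r₂ m =>
          obtain ⟨r₁, hr₁⟩ := hπ₁ (algebraMap R₂ R' r₂)
          refine ⟨(⟨(r₁, r₂), ?_⟩ : PB R₁ R₂ R') • m, ?_⟩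
          · show algebraMap R₁ R' r₁ = algebraMap R₂ R' r₂
            exact hr₁
          · rw [← TensorProduct.smul_tmul]
            congr 1
            show r₂ = _ • (1 : R₂)
            rw [Algebra.smul_def, mul_one]
            rfl
      | add a b ha hb =>
          obtain ⟨ma, ha'⟩ := ha
          obtain ⟨mb, hb'⟩ := hb
          exact ⟨ma + mb, by rw [ha', hb', TensorProduct.tmul_add]⟩
    exact H x₂
  -- the difference lies in the kernel of θ₁
  have hdiff : θ₁ (x₁ - (1 : R₁) ⊗ₜ[PB R₁ R₂ R'] m₂) = 0 := by
    have h1 : θ₁ x₁ = θ₂ x₂ := by rw [← key₁, ← key₂, hx]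
    have h2 : θ₁ ((1 : R₁) ⊗ₜ[PB R₁ R₂ R'] m₂) = θ₂ x₂ := by
      rw [hm₂]
      simp [hθ₁, hθ₂, hf₁, hf₂]
    rw [map_sub, h1, h2, sub_self]
  -- exactness: the kernel is spanned by tensors a ⊗ m with f₁ a = 0
  have hexact := rTensor_exact (R := PB R₁ R₂ R') M
      (LinearMap.exact_subtype_ker_map f₁)
      (by intro r'; obtain ⟨r₁, hr₁⟩ := hπ₁ r'; exact ⟨r₁, hr₁⟩ :
        Function.Surjective f₁)
  obtain ⟨z, hz⟩ := (hexact _).mp hdiff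
  -- every element of that image is of the form 1 ⊗ m' with 1 ⊗ m' = 0 in R₂ ⊗ M
  have hP : ∀ z : ↥(LinearMap.ker f₁) ⊗[PB R₁ R₂ R'] M,
      ∃ m' : M, LinearMap.rTensor M (LinearMap.ker f₁).subtype z
          = (1 : R₁) ⊗ₜ[PB R₁ R₂ R'] m' ∧
        ((1 : R₂) ⊗ₜ[PB R₁ R₂ R'] m' : R₂ ⊗[PB R₁ R₂ R'] M) = 0 := by
    intro z
    induction z using TensorProduct.induction_on with
    | zero => exact ⟨0, by simp, by simp⟩
    | tmul a m =>
        have ha0 : algebraMap R₁ R' (a : R₁) = 0 := a.2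
        set r : PB R₁ R₂ R' := ⟨((a : R₁), 0),
          show algebraMap R₁ R' (a : R₁) = algebraMap R₂ R' 0 by rw [map_zero]; exact ha0⟩
          with hr
        refine ⟨r • m, ?_, ?_⟩
        · rw [LinearMap.rTensor_tmul, ← TensorProduct.smul_tmul]
          congr 1
          show (LinearMap.ker f₁).subtype a = r • (1 : R₁)
          rw [Algebra.smul_def, mul_one]
          rfl
        · rw [← TensorProduct.smul_tmul]
          have : r • (1 : R₂) = 0 := by
            rw [Algebra.smul_def, mul_one]
            rfl
          rw [this, TensorProduct.zero_tmul]
    | add a b ha hb =>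
        obtain ⟨ma, ha1, ha2⟩ := ha
        obtain ⟨mb, hb1, hb2⟩ := hb
        refine ⟨ma + mb, ?_, ?_⟩
        · rw [map_add, ha1, hb1, TensorProduct.tmul_add]
        · rw [TensorProduct.tmul_add, ha2, hb2, add_zero]
  obtain ⟨m', hm'1, hm'2⟩ := hP z
  refine ⟨m₂ + m', ?_, ?_⟩
  · have : x₁ - (1 : R₁) ⊗ₜ[PB R₁ R₂ R'] m₂ = (1 : R₁) ⊗ₜ[PB R₁ R₂ R'] m' := by
      rw [← hz, hm'1]
    rw [TensorProduct.tmul_add, ← this]; abel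
  · rw [TensorProduct.tmul_add, hm'2, add_zero, hm₂]
end

section
/- Let F: C → D be an additive functor between additive categories. If F is full and its kernel ideal (the morphisms annihilated by F) is nilpotent, then F detects isomorphisms: a morphism f in C is an isomorphism if and only if F(f) is an isomorphism. In particular, F induces an epivalence from C onto its essential image. -/
open CategoryTheory

/-- The `n`-th power of the kernel ideal of a functor `F`: morphisms expressible as
composites involving `n` morphisms annihilated by `F` (with `n = 0` giving all morphisms). -/
def kernelIdealPow {C D : Type*} [Category C] [Category D]
    [Preadditive C] [Preadditive D] (F : C ⥤ D) :
    ℕ → ∀ (X Y : C), Set (X ⟶ Y)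
  | 0, _, _ => Set.univ
  | n + 1, X, Y =>
      {f | ∃ (Z : C) (g : X ⟶ Z) (h : Z ⟶ Y),
        F.map h = 0 ∧ g ∈ kernelIdealPow F n X Z ∧ f = g ≫ h}

/-- let `F : C → D` be an additive functor between additive categories.
If `F` is full and its kernel ideal is nilpotent, then `F` detects isomorphisms:
`f` is an isomorphism iff `F f` is.  In particular `F` induces an epivalence onto its
essential image (it is full onto its essential image, dense there by definition, and
detects isomorphisms). -/
theorem full_functor_nilpotent_kernel_detects_isos {C D : Type*} [Category C] [Category D]
    [Preadditive C] [Preadditive D] (F : C ⥤ D) [F.Additive] [F.Full]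
    (hnil : ∃ n : ℕ, 1 ≤ n ∧ ∀ (X Y : C) (f : X ⟶ Y), f ∈ kernelIdealPow F n X Y → f = 0) :
    ∀ {X Y : C} (f : X ⟶ Y), IsIso f ↔ IsIso (F.map f) := by
  obtain ⟨n, -, hn⟩ := hnil
  -- any endomorphism killed by F is nilpotent in the endomorphism ring
  have key : ∀ {X : C} (e : End X), F.map e = 0 → IsUnit ((1 : End X) + e) := by
    intro X e he
    refine IsNilpotent.isUnit_one_add ⟨n, hn X X _ ?_⟩
    have : ∀ m : ℕ, (e ^ m : End X) ∈ kernelIdealPow F m X X := by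
      intro m
      induction m with
      | zero => simp [kernelIdealPow]
      | succ k ih =>
        exact ⟨X, e ^ k, e, he, ih, by rw [pow_succ']; rfl⟩
    exact this n
  intro X Y f
  constructor
  · intro _; infer_instance
  · intro hiso
    obtain ⟨g, hg⟩ := F.map_surjective (inv (F.map f))
    -- f ≫ g = 𝟙 + e with F e = 0
    have he1 : F.map (f ≫ g - 𝟙 X) = 0 := by
      simp [F.map_sub, hg]
    have he2 : F.map (g ≫ f - 𝟙 Y) = 0 := by
      simp [F.map_sub, hg]
    set e₁ : End X := f ≫ g - 𝟙 X with he₁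
    set e₂ : End Y := g ≫ f - 𝟙 Y with he₂
    obtain ⟨u, hu⟩ := key e₁ he1
    obtain ⟨v, hv⟩ := key e₂ he2
    have hu' : (1 : End X) + e₁ = f ≫ g := by
      show 𝟙 X + (f ≫ g - 𝟙 X) = f ≫ g; abel
    have hv' : (1 : End Y) + e₂ = g ≫ f := by
      show 𝟙 Y + (g ≫ f - 𝟙 Y) = g ≫ f; abel
    rw [hu'] at hu; rw [hv'] at hv
    -- right inverse: f ≫ (g ≫ u.inv) = 𝟙 X
    have hr : f ≫ (g ≫ (↑u⁻¹ : End X)) = 𝟙 X := by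
      have := u.inv_mul
      rw [hu] at this
      simpa [End.mul_def, Category.assoc] using this
    -- left inverse: ((↑v⁻¹) ≫ g) ≫ f = 𝟙 Y
    have hl : ((↑v⁻¹ : End Y) ≫ g) ≫ f = 𝟙 Y := by
      have := v.mul_inv
      rw [hv] at this
      simpa [End.mul_def, Category.assoc] using this
    refine ⟨⟨g ≫ (↑u⁻¹ : End X), hr, ?_⟩⟩
    have : (↑v⁻¹ : End Y) ≫ g = g ≫ (↑u⁻¹ : End X) := by
      calc (↑v⁻¹ : End Y) ≫ g
          = ((↑v⁻¹ : End Y) ≫ g) ≫ (f ≫ (g ≫ (↑u⁻¹ : End X))) := by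
            rw [hr]; simp
        _ = (((↑v⁻¹ : End Y) ≫ g) ≫ f) ≫ (g ≫ (↑u⁻¹ : End X)) := by
            simp [Category.assoc]
        _ = g ≫ (↑u⁻¹ : End X) := by rw [hl]; simp
    rw [← this, hl]
end
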